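/- Let a < b, let f : ℝ → ℝ be (d+1)-times continuously differentiable on [a, b], let x ∈ [a, b] and x_1, …, x_N ∈ [a, b], and let c_1, …, c_N be real coefficients that reproduce polynomials of degree ≤ d at x, i.e., Σ_{i=1}^N c_i p(x_i) = p(x) for every polynomial p with deg p ≤ d. Set R = max{ |x_i − x| : 1 ≤ i ≤ N, c_i ≠ 0 }. Then |Σ_{i=1}^N c_i f(x_i) − f(x)| ≤ (Σ_{i=1}^N |c_i|) · R^{d+1}/(d+1)! · sup_{ξ ∈ [a,b]} |f^{(d+1)}(ξ)|. -/

import Mathlib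

open Set

lemma iteratedDerivWithin_subset_eq {f : ℝ → ℝ} {n : WithTop ℕ∞} {s t : Set ℝ}
    (hst : s ⊆ t) (hs : UniqueDiffOn ℝ s) (ht : UniqueDiffOn ℝ t)
    (hf : ContDiffOn ℝ n f t) {m : ℕ} (hmn : (m : WithTop ℕ∞) ≤ n) {x : ℝ} (hx : x ∈ s) :
    iteratedDerivWithin m f s x = iteratedDerivWithin m f t x := by
  have h := ((hf.ftaylorSeriesWithin ht).mono hst).eq_iteratedFDerivWithin_of_uniqueDiffOn
    hmn hs hx
  rw [iteratedDerivWithin_eq_iteratedFDerivWithin, iteratedDerivWithin_eq_iteratedFDerivWithin,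
    ← h]
  rfl

lemma taylorWithinEval_subset_eq {f : ℝ → ℝ} {d : ℕ} {s t : Set ℝ}
    (hst : s ⊆ t) (hs : UniqueDiffOn ℝ s) (ht : UniqueDiffOn ℝ t)
    (hf : ContDiffOn ℝ (d + 1 : ℕ) f t) {x : ℝ} (hx : x ∈ s) (y : ℝ) :
    taylorWithinEval f d s x y = taylorWithinEval f d t x y := by
  rw [taylor_within_apply, taylor_within_apply]
  refine Finset.sum_congr rfl fun k hk => ?_
  rw [iteratedDerivWithin_subset_eq hst hs ht hf ?_ hx]
  have : k ≤ d + 1 := by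
    have := Finset.mem_range.1 hk; omega
  exact_mod_cast Nat.cast_le.2 this

/-- two-sided Lagrange bound with center `x`. -/
lemma taylor_bound_two_sided {a b : ℝ} (hab : a < b) {d : ℕ} {f : ℝ → ℝ}
    (hf : ContDiffOn ℝ (d + 1 : ℕ) f (Icc a b)) {x y : ℝ}
    (hx : x ∈ Icc a b) (hy : y ∈ Icc a b) {M : ℝ}
    (hM : ∀ ξ ∈ Icc a b, |iteratedDerivWithin (d + 1) f (Icc a b) ξ| ≤ M) :
    |f y - taylorWithinEval f d (Icc a b) x y| ≤
      M * |y - x| ^ (d + 1) / (Nat.factorial (d + 1)) := by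
  have hM0 : 0 ≤ M := le_trans (abs_nonneg _) (hM x hx)
  rcases lt_trichotomy x y with hxy | rfl | hyx
  · -- x < y : use mathlib's Lagrange theorem on Icc x y
    have hsub : Icc x y ⊆ Icc a b := Icc_subset_Icc hx.1 hy.2
    have hfs : ContDiffOn ℝ (d + 1 : ℕ) f (Icc x y) := hf.mono hsub
    have hfd : ContDiffOn ℝ (d : ℕ) f (Icc x y) := hfs.of_succ
    have hdiff : DifferentiableOn ℝ (iteratedDerivWithin d f (Icc x y)) (Ioo x y) :=
      (hfs.differentiableOn_iteratedDerivWithin (by exact_mod_cast Nat.lt_succ_self d)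
        (uniqueDiffOn_Icc hxy)).mono Ioo_subset_Icc_self
    obtain ⟨ξ, hξ, hrem⟩ := taylor_mean_remainder_lagrange hxy.ne
      (by rwa [uIcc_of_le hxy.le]) (by rwa [uIcc_of_le hxy.le, uIoo_of_le hxy.le])
    rw [uIoo_of_le hxy.le] at hξ; rw [uIcc_of_le hxy.le] at hrem
    rw [taylorWithinEval_subset_eq hsub (uniqueDiffOn_Icc hxy) (uniqueDiffOn_Icc hab) hf
      (left_mem_Icc.2 hxy.le) y] at hrem
    rw [iteratedDerivWithin_subset_eq hsub (uniqueDiffOn_Icc hxy) (uniqueDiffOn_Icc hab) hf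
      le_rfl (Ioo_subset_Icc_self hξ)] at hrem
    rw [hrem, abs_div, abs_mul, abs_pow]
    rw [abs_of_nonneg (by positivity : (0:ℝ) ≤ ((d + 1).factorial : ℝ))]
    gcongr
    exact hM ξ (hsub (Ioo_subset_Icc_self hξ))
  · rw [taylorWithinEval_self, sub_self, abs_zero]
    positivity
  · -- y < x : manual Cauchy MVT argument
    have hsub : Icc y x ⊆ Icc a b := Icc_subset_Icc hy.1 hx.2
    have hfs : ContDiffOn ℝ (d + 1 : ℕ) f (Icc y x) := hf.mono hsub
    have hfd : ContDiffOn ℝ (d : ℕ) f (Icc y x) := hfs.of_succ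
    have hdiff : DifferentiableOn ℝ (iteratedDerivWithin d f (Icc y x)) (Ioo y x) :=
      (hfs.differentiableOn_iteratedDerivWithin (by exact_mod_cast Nat.lt_succ_self d)
        (uniqueDiffOn_Icc hyx)).mono Ioo_subset_Icc_self
    obtain ⟨ξ, hξ, hmvt⟩ := exists_ratio_hasDerivAt_eq_ratio_slope
      (fun t => taylorWithinEval f d (Icc y x) t y)
      (fun t => ((d.factorial : ℝ)⁻¹ * (y - t) ^ d) • iteratedDerivWithin (d + 1) f (Icc y x) t)
      hyx (continuousOn_taylorWithinEval (uniqueDiffOn_Icc hyx) hfd)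
      (fun t ht => taylorWithinEval_hasDerivAt_Ioo y hyx ht hfd hdiff)
      (fun t => (y - t) ^ (d + 1)) (fun t => -(d + 1) * (y - t) ^ d)
      (by fun_prop) (fun t _ => monomial_has_deriv_aux t y d)
    set D := iteratedDerivWithin (d + 1) f (Icc y x) ξ with hD
    simp only [taylorWithinEval_self, smul_eq_mul, sub_self] at hmvt
    have hpow : (y - ξ) ^ d ≠ 0 := pow_ne_zero _ (by have := hξ.1; intro h; nlinarith [sub_eq_zero.1 h])
    have hfac : ((d.factorial : ℝ)) ≠ 0 := by exact_mod_cast d.factorial_ne_zero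
    have hrem : f y - taylorWithinEval f d (Icc y x) x y =
        D * (y - x) ^ (d + 1) / ((d + 1).factorial) := by
      have h2 : (0:ℝ) ^ (d+1) = 0 := by simp
      rw [h2] at hmvt
      rw [Nat.factorial_succ]
      push_cast
      field_simp at hmvt ⊢
      have h3 : ((y - x) ^ (d + 1) * D) * (y - ξ) ^ d =
          ((taylorWithinEval f d (Icc y x) x y - f y) * ((-1 + -(d:ℝ)) * d.factorial)) *
            (y - ξ) ^ d := by linear_combination (y - ξ) ^ d * hmvt
      have h4 := mul_right_cancel₀ hpow h3
      linear_combination -h4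
    rw [taylorWithinEval_subset_eq hsub (uniqueDiffOn_Icc hyx) (uniqueDiffOn_Icc hab) hf
      (right_mem_Icc.2 hyx.le) y] at hrem
    have hDeq : D = iteratedDerivWithin (d + 1) f (Icc a b) ξ :=
      iteratedDerivWithin_subset_eq hsub (uniqueDiffOn_Icc hyx) (uniqueDiffOn_Icc hab) hf
        le_rfl (Ioo_subset_Icc_self hξ)
    rw [hrem, abs_div, abs_mul, abs_pow]
    rw [abs_of_nonneg (by positivity : (0:ℝ) ≤ ((d + 1).factorial : ℝ))]
    gcongr
    rw [hDeq]
    exact hM ξ (hsub (Ioo_subset_Icc_self hξ))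



/-- Taylor-type error bound for any coefficients `c_i` that
reproduce polynomials of degree `≤ d` at `x`:
`|∑ c_i f(x_i) − f(x)| ≤ (∑ |c_i|) · R^{d+1}/(d+1)! · sup_{ξ∈[a,b]} |f^{(d+1)}(ξ)|`,
where `R = max{|x_i − x| : c_i ≠ 0}`. -/
theorem polynomial_reproduction_error_bound
    (a b : ℝ) (hab : a < b) (d N : ℕ) (f : ℝ → ℝ)
    (hf : ContDiffOn ℝ (d + 1) f (Set.Icc a b))
    (x : ℝ) (hx : x ∈ Set.Icc a b)
    (xs : Fin N → ℝ) (hxs : ∀ i, xs i ∈ Set.Icc a b)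
    (c : Fin N → ℝ)
    (hrep : ∀ p : Polynomial ℝ, p.degree ≤ (d : WithBot ℕ) →
      ∑ i, c i * p.eval (xs i) = p.eval x)
    (R : ℝ)
    (hRub : ∀ i, c i ≠ 0 → |xs i - x| ≤ R)
    (hRmem : ∃ i, c i ≠ 0 ∧ |xs i - x| = R)
    (M : ℝ)
    (hM : ∀ ξ ∈ Set.Icc a b, |iteratedDerivWithin (d + 1) f (Set.Icc a b) ξ| ≤ M) :
    |∑ i, c i * f (xs i) - f x| ≤
      (∑ i, |c i|) * R ^ (d + 1) / (Nat.factorial (d + 1)) * M := by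
  have hf' : ContDiffOn ℝ ((d + 1 : ℕ)) f (Set.Icc a b) := by exact_mod_cast hf
  have hM0 : 0 ≤ M := le_trans (abs_nonneg _) (hM x hx)
  have hR0 : 0 ≤ R := by obtain ⟨i, _, hiR⟩ := hRmem; rw [← hiR]; exact abs_nonneg _
  -- the Taylor polynomial as a `Polynomial ℝ`
  set p : Polynomial ℝ := ∑ k ∈ Finset.range (d + 1),
      Polynomial.C ((k.factorial : ℝ)⁻¹ * iteratedDerivWithin k f (Set.Icc a b) x) *
        (Polynomial.X - Polynomial.C x) ^ k with hp
  have hpeval : ∀ y : ℝ, p.eval y = taylorWithinEval f d (Set.Icc a b) x y := by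
    intro y
    rw [taylor_within_apply, hp, Polynomial.eval_finset_sum]
    refine Finset.sum_congr rfl fun k _ => ?_
    simp [smul_eq_mul]
    ring
  have hpdeg : p.degree ≤ (d : WithBot ℕ) := by
    refine (Polynomial.degree_sum_le _ _).trans ?_
    rw [Finset.sup_le_iff]
    intro k hk
    have hkd : k ≤ d := by have := Finset.mem_range.1 hk; omega
    have h2 : ((Polynomial.X - Polynomial.C x) ^ k).degree ≤ (d : WithBot ℕ) := by
      refine (Polynomial.degree_pow_le _ _).trans ?_
      rw [Polynomial.degree_X_sub_C]
      simpa using (Nat.cast_le (α := WithBot ℕ)).2 hkd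
    have h1 : (Polynomial.C ((k.factorial : ℝ)⁻¹ *
        iteratedDerivWithin k f (Set.Icc a b) x)).degree ≤ (0 : WithBot ℕ) :=
      Polynomial.degree_C_le
    refine (Polynomial.degree_mul_le _ _).trans ?_
    simpa using add_le_add h1 h2
  have hpx : p.eval x = f x := by rw [hpeval, taylorWithinEval_self]
  have hsum : ∑ i, c i * p.eval (xs i) = f x := by rw [hrep p hpdeg, hpx]
  have key : ∀ i, |f (xs i) - p.eval (xs i)| ≤
      M * |xs i - x| ^ (d + 1) / (Nat.factorial (d + 1)) := by
    intro i
    rw [hpeval]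
    exact taylor_bound_two_sided hab hf' hx (hxs i) hM
  calc |∑ i, c i * f (xs i) - f x|
      = |∑ i, c i * (f (xs i) - p.eval (xs i))| := by
        rw [← hsum]; congr 1
        rw [← Finset.sum_sub_distrib]
        exact Finset.sum_congr rfl fun i _ => by ring
    _ ≤ ∑ i, |c i * (f (xs i) - p.eval (xs i))| := Finset.abs_sum_le_sum_abs _ _
    _ ≤ ∑ i, |c i| * (R ^ (d + 1) / (Nat.factorial (d + 1)) * M) := by
        refine Finset.sum_le_sum fun i _ => ?_
        rw [abs_mul]
        rcases eq_or_ne (c i) 0 with h0 | h0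
        · simp [h0]
        · refine mul_le_mul_of_nonneg_left ?_ (abs_nonneg _)
          refine (key i).trans ?_
          have hpow : |xs i - x| ^ (d + 1) ≤ R ^ (d + 1) :=
            pow_le_pow_left₀ (abs_nonneg _) (hRub i h0) _
          calc M * |xs i - x| ^ (d + 1) / (Nat.factorial (d + 1))
              ≤ M * R ^ (d + 1) / (Nat.factorial (d + 1)) := by gcongr
            _ = R ^ (d + 1) / (Nat.factorial (d + 1)) * M := by ring
    _ = (∑ i, |c i|) * R ^ (d + 1) / (Nat.factorial (d + 1)) * M := by
        rw [← Finset.sum_mul]; ring
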